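/- arXiv:1505.07839 — 2 statements merged into one kernel-verified Lean document; each statement's English description precedes it below -/
import Mathlib

section
/- The map f_k is a proof by contraction of the cyclic inequality C_{2k+1}(k+1,k): for every k ≥ 1, define π_k to be the permutation of coordinates (v_0, v_1, …, v_{2k}) ↦ (v_0, v_2, v_4, …, v_{2k}, v_1, v_3, …, v_{2k−1}), and define f_k : {0,1}^{2k+1} → {0,1}^{2k+2} by f_k(0) := (0, 0) and, for x ≠ 0, f_k(x) := ( complement of π_k(g_k(π_k^{−1}(x))) , 1 ), where the complement flips every bit. Then: (i) f_k is a contraction with respect to Hamming distance, i.e. ‖f_k(x) − f_k(x')‖₁ ≤ ‖x − x'‖₁ for all x, x' ∈ {0,1}^{2k+1}; and (ii) f_k maps the occurrence vectors onto each other: f_k(x_i) = y_i for i = 1,…,2k+2, where x_i (for i ≤ 2k+1) is the cyclic shift by i−1 of the bitstring 1^{k+1}0^k and x_{2k+2} := 0, and y_i (for i ≤ 2k+1) is the cyclic shift by i−1 of 0^{k+1}1^k followed by a final coordinate equal to 1 (i.e. y_i = (complement of x_i, 1)), while y_{2k+2} := 0. -/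
/-- The number of consecutive zeros of `x` cyclically following position `j`
(capped at `2k`, which is no restriction when `x` is nonzero). -/
def runAfter (k : ℕ) (x : Fin (2 * k + 1) → Bool) (j : Fin (2 * k + 1)) : ℕ :=
  (Finset.univ.filter fun t : Fin (2 * k + 1) =>
    0 < (t : ℕ) ∧ ∀ s : Fin (2 * k + 1), 0 < (s : ℕ) → (s : ℕ) ≤ (t : ℕ) →
      x (j + s) = false).card

/-- The map `g_k` on bitstrings of length `2k+1` (coordinates regarded cyclically):
it fixes every coordinate equal to `1`; on each maximal cyclic block of consecutive
zeros it maps every coordinate to `1`, except that on blocks of odd length the first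
coordinate of the block (in cyclic order) stays `0`. -/
def gmap (k : ℕ) (x : Fin (2 * k + 1) → Bool) : Fin (2 * k + 1) → Bool :=
  fun j =>
    if x j = false ∧ x (j - 1) = true ∧ runAfter k x j % 2 = 0 then false else true

open Fin.NatCast in
/-- Coordinate reindexing of the permutation
`π_k : (v_0,…,v_{2k}) ↦ (v_0, v_2, …, v_{2k}, v_1, v_3, …, v_{2k−1})`,
so that `(π_k v) j = v (tau k j)`. -/
def tau (k : ℕ) (j : Fin (2 * k + 1)) : Fin (2 * k + 1) :=
  if (j : ℕ) ≤ k then ((2 * (j : ℕ) : ℕ) : Fin (2 * k + 1))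
  else ((2 * (j : ℕ) - (2 * k + 1) : ℕ) : Fin (2 * k + 1))

open Fin.NatCast in
/-- The inverse reindexing, so that `(π_k⁻¹ v) j = v (tauInv k j)`. -/
def tauInv (k : ℕ) (j : Fin (2 * k + 1)) : Fin (2 * k + 1) :=
  if (j : ℕ) % 2 = 0 then (((j : ℕ) / 2 : ℕ) : Fin (2 * k + 1))
  else ((k + ((j : ℕ) + 1) / 2 : ℕ) : Fin (2 * k + 1))

/-- The occurrence vector `x_i` (with zero-based index `i`, matching the paper's
`x_{i+1}`): the cyclic shift by `i` of the bitstring `1^{k+1} 0^k`. -/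
def xOcc (k : ℕ) (i : Fin (2 * k + 1)) : Fin (2 * k + 1) → Bool :=
  fun j => decide (((j - i : Fin (2 * k + 1)) : ℕ) ≤ k)

/-- The map `f_k : {0,1}^{2k+1} → {0,1}^{2k+2}` of the proof by contraction of the
cyclic inequality `C_{2k+1}(k+1,k)`: `f_k(0) = (0,0)` and
`f_k(x) = (complement of π_k(g_k(π_k⁻¹(x))), 1)` for `x ≠ 0`. -/
def fmap (k : ℕ) (x : Fin (2 * k + 1) → Bool) : Fin (2 * k + 1 + 1) → Bool :=
  if x = fun _ => false then fun _ => false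
  else Fin.snoc (fun j => ! gmap k (fun i => x (tauInv k i)) (tau k j)) true

namespace S17

open Fin.NatCast
open Fin.CommRing

lemma val_cast {k m : ℕ} (h : m < 2*k+1) : ((m : Fin (2*k+1)) : ℕ) = m :=
  Fin.val_cast_of_lt h

lemma cast_mod (k a : ℕ) : ((a % (2*k+1) : ℕ) : Fin (2*k+1)) = (a : Fin (2*k+1)) := by
  conv_rhs => rw [← Nat.div_add_mod a (2*k+1)]
  rw [Nat.cast_add, Nat.cast_mul, Fin.natCast_self, zero_mul, zero_add]

lemma runAfter_eq (k : ℕ) (x : Fin (2*k+1) → Bool) (j : Fin (2*k+1)) (r : ℕ)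
    (hr : r ≤ 2*k)
    (hall : ∀ s : ℕ, 1 ≤ s → s ≤ r → x (j + (s : Fin (2*k+1))) = false)
    (hstop : r = 2*k ∨ x (j + ((r+1 : ℕ) : Fin (2*k+1))) = true) :
    runAfter k x j = r := by
  unfold runAfter
  have hset : (Finset.univ.filter fun t : Fin (2*k+1) =>
      0 < (t:ℕ) ∧ ∀ s : Fin (2*k+1), 0 < (s:ℕ) → (s:ℕ) ≤ (t:ℕ) → x (j + s) = false)
      = Finset.univ.filter fun t : Fin (2*k+1) => 1 ≤ (t:ℕ) ∧ (t:ℕ) ≤ r := by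
    ext t
    simp only [Finset.mem_filter, Finset.mem_univ, true_and]
    constructor
    · rintro ⟨ht0, hts⟩
      refine ⟨ht0, ?_⟩
      by_contra hlt
      push_neg at hlt
      rcases hstop with h2k | hst
      · have := t.isLt; omega
      · have hrlt : r < 2*k := by have := t.isLt; omega
        have hs : ((r+1 : ℕ) : Fin (2*k+1)) = ⟨r+1, by omega⟩ := by
          apply Fin.ext; exact val_cast (by omega)
        have := hts ⟨r+1, by omega⟩ (by simp) (by simpa using hlt)
        rw [← hs] at this
        rw [this] at hst
        exact Bool.false_ne_true hst
    · rintro ⟨h1, h2⟩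
      refine ⟨h1, fun s hs0 hst => ?_⟩
      have := hall (s:ℕ) hs0 (le_trans hst h2)
      rwa [Fin.cast_val_eq_self] at this
  rw [hset]
  have himg : (Finset.univ.filter fun t : Fin (2*k+1) => 1 ≤ (t:ℕ) ∧ (t:ℕ) ≤ r)
      = (Finset.Icc 1 r).image (fun m : ℕ => (m : Fin (2*k+1))) := by
    ext t
    simp only [Finset.mem_filter, Finset.mem_univ, true_and, Finset.mem_image,
      Finset.mem_Icc]
    constructor
    · rintro ⟨h1, h2⟩
      exact ⟨(t:ℕ), ⟨h1, h2⟩, Fin.cast_val_eq_self t⟩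
    · rintro ⟨m, ⟨hm1, hm2⟩, rfl⟩
      rw [val_cast (by omega)]
      exact ⟨hm1, hm2⟩
  rw [himg, Finset.card_image_of_injOn, Nat.card_Icc]
  · omega
  · intro a ha b hb hab
    simp only [Finset.coe_Icc, Set.mem_Icc] at ha hb
    have := congrArg Fin.val hab
    rwa [val_cast (by omega), val_cast (by omega)] at this

lemma runAfter_spec (k : ℕ) (x : Fin (2*k+1) → Bool) (j : Fin (2*k+1)) :
    runAfter k x j ≤ 2*k ∧
    (∀ s : ℕ, 1 ≤ s → s ≤ runAfter k x j → x (j + (s : Fin (2*k+1))) = false) ∧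
    (runAfter k x j = 2*k ∨
      x (j + ((runAfter k x j + 1 : ℕ) : Fin (2*k+1))) = true) := by
  classical
  set P : ℕ → Prop := fun t => ∀ s : ℕ, 1 ≤ s → s ≤ t → x (j + (s : Fin (2*k+1))) = false
    with hP
  have hP0 : P 0 := fun s hs1 hs0 => absurd (le_trans hs1 hs0) (by omega)
  set r : ℕ := Nat.findGreatest P (2*k) with hrdef
  have hall : P r := Nat.findGreatest_spec (Nat.zero_le _) hP0
  have hrle : r ≤ 2*k := Nat.findGreatest_le _
  have hstop : r = 2*k ∨ x (j + ((r+1 : ℕ) : Fin (2*k+1))) = true := by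
    by_cases h2k : r = 2*k
    · exact Or.inl h2k
    · right
      have hnP : ¬ P (r+1) :=
        Nat.findGreatest_is_greatest (Nat.lt_succ_self r) (by omega)
      simp only [hP] at hnP
      push_neg at hnP
      obtain ⟨s, hs1, hs2, hsne⟩ := hnP
      have hseq : s = r + 1 := by
        rcases Nat.lt_or_ge s (r+1) with h | h
        · exact absurd (hall s hs1 (by omega)) hsne
        · omega
      subst hseq
      cases hxx : x (j + ((r+1 : ℕ) : Fin (2*k+1)))
      · exact absurd hxx hsne
      · rfl
  have := runAfter_eq k x j r hrle hall hstop
  rw [this]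
  exact ⟨hrle, hall, hstop⟩

lemma runAfter_congr (k : ℕ) (x x' : Fin (2*k+1) → Bool) (j : Fin (2*k+1))
    (h : ∀ t : Fin (2*k+1), 0 < (t:ℕ) → x (j + t) = x' (j + t)) :
    runAfter k x j = runAfter k x' j := by
  unfold runAfter
  congr 1
  apply Finset.filter_congr
  intro t _
  constructor
  · rintro ⟨h1, h2⟩
    exact ⟨h1, fun s hs1 hs2 => (h s hs1) ▸ h2 s hs1 hs2⟩
  · rintro ⟨h1, h2⟩
    exact ⟨h1, fun s hs1 hs2 => (h s hs1).symm ▸ h2 s hs1 hs2⟩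

lemma add_nat_eq_iff {k : ℕ} (j p : Fin (2*k+1)) {s : ℕ} (hs : s < 2*k+1) :
    j + (s : Fin (2*k+1)) = p ↔ s = ((p - j : Fin (2*k+1)) : ℕ) := by
  constructor
  · intro h
    have h2 : (s : Fin (2*k+1)) = p - j := by rw [← h]; ring
    have := congrArg Fin.val h2; rwa [val_cast hs] at this
  · intro h
    have h2 : (s : Fin (2*k+1)) = p - j := by
      apply Fin.ext; rw [val_cast hs, h]
    rw [h2]; ring

lemma cast_two_k_eq_neg_one (k : ℕ) : ((2*k : ℕ) : Fin (2*k+1)) = -1 := by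
  have h0 : ((2*k + 1 : ℕ) : Fin (2*k+1)) = 0 := Fin.natCast_self _
  rw [Nat.cast_add, Nat.cast_one] at h0
  exact eq_neg_of_add_eq_zero_left h0

lemma gmap_false_iff (k : ℕ) (x : Fin (2*k+1) → Bool) (j : Fin (2*k+1)) :
    gmap k x j = false ↔
      x j = false ∧ x (j - 1) = true ∧ runAfter k x j % 2 = 0 := by
  unfold gmap
  split_ifs with h
  · simp [h]
  · simp [h]

lemma gmap_true_of_true (k : ℕ) (x : Fin (2*k+1) → Bool) (j : Fin (2*k+1))
    (h : x j = true) : gmap k x j = true := by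
  unfold gmap
  rw [if_neg]
  rintro ⟨h1, -, -⟩
  rw [h] at h1; exact absurd h1 (by simp)

lemma g_zero (k : ℕ) : gmap k (fun _ => false) = fun _ => true := by
  funext j
  unfold gmap
  rw [if_neg]
  rintro ⟨-, h2, -⟩
  exact Bool.false_ne_true h2

lemma g_single (k : ℕ) (hk : 1 ≤ k) (z : Fin (2*k+1) → Bool) (p : Fin (2*k+1))
    (hp : z p = true) (h1 : ∀ q, q ≠ p → z q = false) :
    gmap k z = fun _ => true := by
  funext j
  by_cases hj : z j = true
  · exact gmap_true_of_true k z j hj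
  · have hjf : z j = false := by
      cases h : z j
      · rfl
      · exact absurd h hj
    unfold gmap
    rw [if_neg]
    rintro ⟨-, h2, h3⟩
    by_cases hj1 : j - 1 = p
    · have hjeq : j = p + 1 := by rw [← hj1]; ring
      have hpmj : (p - j : Fin (2*k+1)) = ((2*k : ℕ) : Fin (2*k+1)) := by
        rw [hjeq, cast_two_k_eq_neg_one]; ring
      have hpmjv : ((p - j : Fin (2*k+1)) : ℕ) = 2*k := by
        rw [hpmj]; exact val_cast (by omega)
      have hrun : runAfter k z j = 2*k - 1 := by
        apply runAfter_eq k z j (2*k-1) (by omega)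
        · intro s hs1 hs2
          apply h1
          intro hcon
          rw [add_nat_eq_iff j p (by omega), hpmjv] at hcon
          omega
        · right
          have h4 : (2*k-1+1 : ℕ) = 2*k := by omega
          rw [h4]
          have h5 : j + ((2*k : ℕ) : Fin (2*k+1)) = p := by
            rw [add_nat_eq_iff j p (by omega), hpmjv]
          rw [h5]; exact hp
      rw [hrun] at h3
      omega
    · exact Bool.false_ne_true ((h1 _ hj1).symm.trans h2)

lemma sub_one_ne_self {k : ℕ} (hk : 1 ≤ k) (p : Fin (2*k+1)) : p - 1 ≠ p := by
  intro h
  have h1 : (1 : Fin (2*k+1)) = 0 := sub_eq_self.mp h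
  have h2 := congrArg Fin.val h1
  simp [Fin.val_one'] at h2
  omega


lemma flip_lip' (k : ℕ) (hk : 1 ≤ k) (z : Fin (2*k+1) → Bool) (p : Fin (2*k+1))
    (hp : z p = true) :
    hammingDist (gmap k z) (gmap k (Function.update z p false)) ≤ 1 := by
  classical
  set z' := Function.update z p false with hz'def
  have hz'p : z' p = false := Function.update_self p false z
  have hz'q : ∀ q, q ≠ p → z' q = z q := fun q hq => Function.update_of_ne hq false z
  by_cases hB : ∃ q, q ≠ p ∧ z q = true
  · obtain ⟨q, hqp, hq⟩ := hB
    have hne_p : ∀ s : ℕ, 1 ≤ s → s ≤ 2*k → p + ((s : ℕ) : Fin (2*k+1)) ≠ p := by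
      intro s h1 h2 hcon
      rw [add_nat_eq_iff p p (by omega)] at hcon
      simp at hcon
      omega
    have hb : runAfter k z' p = runAfter k z p := by
      apply runAfter_congr
      intro t ht
      apply hz'q
      intro hcon
      have ht0 : t = 0 := by
        have := add_left_cancel (a := p) (b := t) (c := 0) (by rw [add_zero]; exact hcon)
        exact this
      rw [ht0] at ht; simp at ht
    set b := runAfter k z p with hbdef
    obtain ⟨hble, hS1p, hS2p⟩ := runAfter_spec k z p
    rw [← hbdef] at hble hS1p hS2p
    have hblt : b < 2*k := by
      set m := ((q - p : Fin (2*k+1)) : ℕ) with hm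
      have hm1 : 1 ≤ m := by
        rcases Nat.eq_zero_or_pos m with h | h
        · exfalso; apply hqp
          have h9 : (q - p : Fin (2*k+1)) = 0 := Fin.ext h
          exact sub_eq_zero.mp h9
        · omega
      have hm2 : m ≤ 2*k := by have := (q - p : Fin (2*k+1)).isLt; omega
      have hpq : p + ((m : ℕ) : Fin (2*k+1)) = q := by
        rw [hm, Fin.cast_val_eq_self]; ring
      by_contra hcon
      have := hS1p m hm1 (by omega)
      rw [hpq, hq] at this
      simp at this
    have hstopz : z (p + ((b + 1 : ℕ) : Fin (2*k+1))) = true :=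
      hS2p.resolve_left (by omega)
    have hEx : ∃ t : ℕ, z (p - ((t+1 : ℕ) : Fin (2*k+1))) = true := by
      set m' := ((p - q : Fin (2*k+1)) : ℕ) with hm'
      have hm'1 : 1 ≤ m' := by
        rcases Nat.eq_zero_or_pos m' with h | h
        · exfalso; apply hqp
          have h9 : (p - q : Fin (2*k+1)) = 0 := Fin.ext h
          exact (sub_eq_zero.mp h9).symm
        · omega
      refine ⟨m' - 1, ?_⟩
      have h8 : (m' - 1 + 1 : ℕ) = m' := by omega
      rw [h8, hm', Fin.cast_val_eq_self]
      have h7 : p - (p - q) = q := by ring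
      rw [h7]; exact hq
    set a := Nat.find hEx with hadef
    have haQ : z (p - ((a+1 : ℕ) : Fin (2*k+1))) = true := Nat.find_spec hEx
    have hale : a ≤ 2*k - 1 := by
      set m' := ((p - q : Fin (2*k+1)) : ℕ) with hm'
      have hm'1 : 1 ≤ m' := by
        rcases Nat.eq_zero_or_pos m' with h | h
        · exfalso; apply hqp
          have h9 : (p - q : Fin (2*k+1)) = 0 := Fin.ext h
          exact (sub_eq_zero.mp h9).symm
        · omega
      have hm'2 : m' ≤ 2*k := by have := (p - q : Fin (2*k+1)).isLt; omega
      have hQ : z (p - ((m' - 1 + 1 : ℕ) : Fin (2*k+1))) = true := by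
        have h8 : (m' - 1 + 1 : ℕ) = m' := by omega
        rw [h8, hm', Fin.cast_val_eq_self]
        have h7 : p - (p - q) = q := by ring
        rw [h7]; exact hq
      have := Nat.find_min' hEx hQ
      omega
    set q0 : Fin (2*k+1) := if b % 2 = 0 then p - ((a : ℕ) : Fin (2*k+1)) else p + 1
      with hq0def
    have hsub : (Finset.univ.filter fun j => gmap k z j ≠ gmap k z' j) ⊆ {q0} := by
      intro j hj
      rw [Finset.mem_filter] at hj
      obtain ⟨-, hj⟩ := hj
      rw [Finset.mem_singleton]
      by_cases hjp : j = p
      · subst hjp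
        have h1 : gmap k z j = true := gmap_true_of_true k z j hp
        have h2 : gmap k z' j = false := by
          cases hc : gmap k z' j
          · rfl
          · exact absurd (h1.trans hc.symm) hj
        rw [gmap_false_iff] at h2
        obtain ⟨-, hc2, hc3⟩ := h2
        rw [hb] at hc3
        have hzj1 : z (j - 1) = true := by
          rw [← hz'q _ (sub_one_ne_self hk j)]; exact hc2
        have ha0 : a = 0 := by
          rw [hadef, Nat.find_eq_zero]
          simpa using hzj1
        rw [hq0def, if_pos hc3, ha0]
        simp
      · by_cases hjp1 : j = p + 1
        · subst hjp1
          have hbodd : ¬ (b % 2 = 0) := by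
            intro hbev
            apply hj
            have hgz' : gmap k z' (p + 1) = true := by
              unfold gmap
              rw [if_neg]
              rintro ⟨-, c2, -⟩
              rw [add_sub_cancel_right, hz'p] at c2
              exact Bool.false_ne_true c2
            have hgz : gmap k z (p + 1) = true := by
              cases hc : z (p + 1)
              · have hb1 : 1 ≤ b := by
                  by_contra hcon
                  have hb0 : b = 0 := by omega
                  rw [hb0] at hstopz
                  have h6 : p + ((0 + 1 : ℕ) : Fin (2*k+1)) = p + 1 := by norm_num
                  rw [h6, hc] at hstopz
                  exact Bool.false_ne_true hstopz
                have hrun : runAfter k z (p+1) = b - 1 := by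
                  apply runAfter_eq k z (p+1) (b-1) (by omega)
                  · intro s hs1 hs2
                    have hpos : (p + 1) + ((s : ℕ) : Fin (2*k+1))
                        = p + ((s + 1 : ℕ) : Fin (2*k+1)) := by
                      push_cast
                      ring
                    rw [hpos]
                    exact hS1p (s+1) (by omega) (by omega)
                  · right
                    have heq : (b - 1 + 1 : ℕ) = b := by omega
                    rw [heq]
                    have hpos : (p + 1) + ((b : ℕ) : Fin (2*k+1))
                        = p + ((b + 1 : ℕ) : Fin (2*k+1)) := by
                      push_cast
                      ring
                    rw [hpos]
                    exact hstopz
                unfold gmap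
                rw [if_neg]
                rintro ⟨-, -, c3⟩
                rw [hrun] at c3
                omega
              · exact gmap_true_of_true k z _ hc
            rw [hgz, hgz']
          rw [hq0def, if_neg hbodd]
        · -- general case
          have hzj : z' j = z j := hz'q j hjp
          have hj1p : j - 1 ≠ p := by
            intro hcon
            apply hjp1
            rw [← hcon]; ring
          have hzj1 : z' (j - 1) = z (j - 1) := hz'q _ hj1p
          cases hcj : z j with
          | true =>
            exact absurd ((gmap_true_of_true k z j hcj).trans
              (gmap_true_of_true k z' j (hzj.trans hcj)).symm) hj
          | false =>
          cases hcj1 : z (j - 1) with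
          | false =>
            have e1 : gmap k z j = true := by
              unfold gmap; rw [if_neg]; rintro ⟨-, c2, -⟩
              rw [hcj1] at c2; exact Bool.false_ne_true c2
            have e2 : gmap k z' j = true := by
              unfold gmap; rw [if_neg]; rintro ⟨-, c2, -⟩
              rw [hzj1, hcj1] at c2; exact Bool.false_ne_true c2
            exact absurd (e1.trans e2.symm) hj
          | true =>
          obtain ⟨hrle, hS1j, hS2j⟩ := runAfter_spec k z j
          have hrnp : ∀ s : ℕ, 1 ≤ s → s ≤ runAfter k z j →
              j + ((s:ℕ) : Fin (2*k+1)) ≠ p := by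
            intro s a1 a2 hcon
            have := hS1j s a1 a2
            rw [hcon, hp] at this
            simp at this
          have hrlt : runAfter k z j < 2*k := by
            set mp := ((p - j : Fin (2*k+1)) : ℕ) with hmp
            have hmp1 : 1 ≤ mp := by
              rcases Nat.eq_zero_or_pos mp with h | h
              · exfalso; apply hjp
                have h9 : (p - j : Fin (2*k+1)) = 0 := Fin.ext h
                exact (sub_eq_zero.mp h9).symm
              · omega
            have hmp2 : mp ≤ 2*k := by have := (p - j : Fin (2*k+1)).isLt; omega
            have hjmp : j + ((mp : ℕ) : Fin (2*k+1)) = p := by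
              rw [add_nat_eq_iff j p (by omega)]
            by_contra hcon
            have := hS1j mp hmp1 (by omega)
            rw [hjmp, hp] at this
            simp at this
          have hstopj : z (j + ((runAfter k z j + 1 : ℕ) : Fin (2*k+1))) = true :=
            hS2j.resolve_left (by omega)
          by_cases hreach : j + ((runAfter k z j + 1 : ℕ) : Fin (2*k+1)) = p
          · have hrne : runAfter k z j ≠ 2*k - 1 := by
              intro hcon
              apply hjp1
              have h5 : j + ((runAfter k z j + 1 : ℕ) : Fin (2*k+1)) = j - 1 := by
                rw [hcon]
                have h4 : (2*k-1+1:ℕ) = 2*k := by omega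
                rw [h4, cast_two_k_eq_neg_one]; ring
              rw [h5] at hreach
              rw [← hreach]; ring
            have hble2 : b ≤ 2*k - 2 - runAfter k z j := by
              by_contra hcon
              push_neg at hcon
              have := hS1p (2*k-1-runAfter k z j) (by omega) (by omega)
              have hpos : p + ((2*k-1-runAfter k z j : ℕ) : Fin (2*k+1)) = j - 1 := by
                rw [← hreach]
                have h4 : ((runAfter k z j + 1 : ℕ) : Fin (2*k+1))
                    + ((2*k-1-runAfter k z j : ℕ) : Fin (2*k+1))
                    = ((2*k : ℕ) : Fin (2*k+1)) := by
                  rw [← Nat.cast_add]; exact congrArg _ (by omega)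
                calc j + ((runAfter k z j + 1 : ℕ) : Fin (2*k+1))
                      + ((2*k-1-runAfter k z j : ℕ) : Fin (2*k+1))
                    = j + (((runAfter k z j + 1 : ℕ) : Fin (2*k+1))
                      + ((2*k-1-runAfter k z j : ℕ) : Fin (2*k+1))) := by ring
                  _ = j + ((2*k : ℕ) : Fin (2*k+1)) := by rw [h4]
                  _ = j - 1 := by rw [cast_two_k_eq_neg_one]; ring
              rw [hpos, hcj1] at this
              simp at this
            have hrz' : runAfter k z' j = runAfter k z j + 1 + b := by
              apply runAfter_eq k z' j (runAfter k z j + 1 + b) (by omega)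
              · intro s a1 a2
                rcases Nat.lt_or_ge s (runAfter k z j + 1) with hlt | hge
                · rw [hz'q _ (hrnp s a1 (by omega))]
                  exact hS1j s a1 (by omega)
                · rcases Nat.eq_or_lt_of_le hge with heq | hgt
                  · rw [← heq, hreach]
                    exact hz'p
                  · have hsplit : j + ((s:ℕ) : Fin (2*k+1))
                        = p + ((s - (runAfter k z j + 1) : ℕ) : Fin (2*k+1)) := by
                      rw [← hreach]
                      have h4 : ((runAfter k z j + 1 : ℕ) : Fin (2*k+1))
                          + ((s - (runAfter k z j + 1) : ℕ) : Fin (2*k+1))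
                          = ((s : ℕ) : Fin (2*k+1)) := by
                        rw [← Nat.cast_add]; exact congrArg _ (by omega)
                      rw [← h4]; ring
                    rw [hsplit]
                    have hd1 : 1 ≤ s - (runAfter k z j + 1) := by omega
                    have hd2 : s - (runAfter k z j + 1) ≤ b := by omega
                    rw [hz'q _ (hne_p _ hd1 (by omega))]
                    exact hS1p _ hd1 hd2
              · right
                have hsplit : j + ((runAfter k z j + 1 + b + 1 : ℕ) : Fin (2*k+1))
                    = p + ((b+1 : ℕ) : Fin (2*k+1)) := by
                  rw [← hreach]
                  have h4 : ((runAfter k z j + 1 : ℕ) : Fin (2*k+1))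
                      + ((b + 1 : ℕ) : Fin (2*k+1))
                      = ((runAfter k z j + 1 + b + 1 : ℕ) : Fin (2*k+1)) := by
                    rw [← Nat.cast_add]; exact congrArg _ (by omega)
                  rw [← h4]; ring
                rw [hsplit, hz'q _ (hne_p (b+1) (by omega) (by omega))]
                exact hstopz
            by_cases hbev : b % 2 = 0
            · have haval : a = runAfter k z j + 1 := by
                rw [hadef, Nat.find_eq_iff]
                constructor
                · have hpos : p - ((runAfter k z j + 1 + 1 : ℕ) : Fin (2*k+1))
                      = j - 1 := by
                    rw [← hreach]
                    have h4 : ((runAfter k z j + 1 + 1 : ℕ) : Fin (2*k+1))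
                        = ((runAfter k z j + 1 : ℕ) : Fin (2*k+1)) + 1 := by
                      push_cast; ring
                    rw [h4]; ring
                  rw [hpos]; exact hcj1
                · intro t ht
                  have hpos : p - ((t+1 : ℕ) : Fin (2*k+1))
                      = j + ((runAfter k z j - t : ℕ) : Fin (2*k+1)) := by
                    rw [← hreach]
                    have h4 : ((t+1 : ℕ) : Fin (2*k+1))
                        + ((runAfter k z j - t : ℕ) : Fin (2*k+1))
                        = ((runAfter k z j + 1 : ℕ) : Fin (2*k+1)) := by
                      rw [← Nat.cast_add]; exact congrArg _ (by omega)
                    rw [← h4]; ring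
                  rw [hpos]
                  rcases Nat.eq_zero_or_pos (runAfter k z j - t) with h0 | hpos2
                  · rw [h0, Nat.cast_zero, add_zero, hcj]
                    simp
                  · have := hS1j (runAfter k z j - t) hpos2 (by omega)
                    rw [this]
                    simp
              rw [hq0def, if_pos hbev, haval]
              rw [← hreach]; ring
            · exfalso; apply hj
              unfold gmap
              rw [hzj, hzj1, hrz']
              apply if_congr _ rfl rfl
              constructor
              · rintro ⟨c1, c2, c3⟩; exact ⟨c1, c2, by omega⟩
              · rintro ⟨c1, c2, c3⟩; exact ⟨c1, c2, by omega⟩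
          · exfalso; apply hj
            have hrz' : runAfter k z' j = runAfter k z j := by
              apply runAfter_eq k z' j (runAfter k z j) (by omega)
              · intro s a1 a2
                rw [hz'q _ (hrnp s a1 a2)]; exact hS1j s a1 a2
              · right
                rw [hz'q _ hreach]; exact hstopj
            unfold gmap
            rw [hzj, hzj1, hrz']
    calc hammingDist (gmap k z) (gmap k z')
        = (Finset.univ.filter fun j => gmap k z j ≠ gmap k z' j).card := rfl
      _ ≤ ({q0} : Finset (Fin (2*k+1))).card := Finset.card_le_card hsub
      _ = 1 := Finset.card_singleton q0
  · push_neg at hB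
    have h1 : ∀ q, q ≠ p → z q = false := by
      intro q hq
      cases hc : z q
      · rfl
      · exact absurd hc (by simpa using hB q hq)
    have hz'0 : z' = fun _ => false := by
      funext t
      by_cases ht : t = p
      · rw [ht]; exact hz'p
      · rw [hz'q t ht]; exact h1 t ht
    rw [hz'0, g_zero, g_single k hk z p hp h1, hammingDist_self]
    omega


lemma flip_lip (k : ℕ) (hk : 1 ≤ k) (z : Fin (2*k+1) → Bool) (p : Fin (2*k+1)) :
    hammingDist (gmap k z) (gmap k (Function.update z p (!z p))) ≤ 1 := by
  cases hzp : z p with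
  | true =>
    simp only [Bool.not_true]
    exact flip_lip' k hk z p hzp
  | false =>
    simp only [Bool.not_false]
    set z2 := Function.update z p true with hz2
    have h2 : z2 p = true := Function.update_self p true z
    have h3 : Function.update z2 p false = z := by
      funext t
      by_cases ht : t = p
      · subst ht; rw [Function.update_self]; exact hzp.symm
      · rw [Function.update_of_ne ht, hz2, Function.update_of_ne ht]
    have h4 := flip_lip' k hk z2 p h2
    rw [h3] at h4
    rw [hammingDist_comm]
    exact h4

lemma dist_update {n : ℕ} (y w : Fin n → Bool) (p : Fin n) (h : y p ≠ w p) :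
    hammingDist (Function.update y p (w p)) w = hammingDist y w - 1 := by
  unfold hammingDist
  have hset : (Finset.univ.filter fun i => Function.update y p (w p) i ≠ w i)
      = (Finset.univ.filter fun i => y i ≠ w i).erase p := by
    ext t
    simp only [Finset.mem_filter, Finset.mem_univ, true_and, Finset.mem_erase]
    by_cases ht : t = p
    · subst ht; simp [Function.update_self]
    · rw [Function.update_of_ne ht]; tauto
  rw [hset, Finset.card_erase_of_mem]
  simp only [Finset.mem_filter, Finset.mem_univ, true_and]
  exact h

lemma g_lip (k : ℕ) (hk : 1 ≤ k) : ∀ (m : ℕ) (y y' : Fin (2*k+1) → Bool),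
    hammingDist y y' = m → hammingDist (gmap k y) (gmap k y') ≤ m := by
  intro m
  induction m using Nat.strong_induction_on with
  | _ m ih =>
    intro y y' hd
    rcases Nat.eq_zero_or_pos m with h0 | hpos
    · subst h0
      rw [eq_of_hammingDist_eq_zero hd, hammingDist_self]
    · have hne : y ≠ y' := by
        intro h; rw [h, hammingDist_self] at hd; omega
      have hex : ∃ p, y p ≠ y' p := by
        by_contra hcon; push_neg at hcon; exact hne (funext hcon)
      obtain ⟨p, hpne⟩ := hex
      set y'' := Function.update y' p (y p) with hy''
      have hyp : y'' p = y p := Function.update_self p (y p) y'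
      have hdd : hammingDist y y'' = m - 1 := by
        have h5 := dist_update y' y p (Ne.symm hpne)
        rw [hammingDist_comm y' y] at h5
        rw [hammingDist_comm, hy'', h5, hd]
      have h1 : hammingDist (gmap k y) (gmap k y'') ≤ m - 1 :=
        ih (m-1) (by omega) y y'' hdd
      have h2 : hammingDist (gmap k y'') (gmap k y') ≤ 1 := by
        have hupd : y' = Function.update y'' p (!y'' p) := by
          funext t
          by_cases ht : t = p
          · subst ht
            rw [Function.update_self, hyp]
            cases h1 : y t <;> cases h2 : y' t <;> simp_all
          · rw [Function.update_of_ne ht, hy'', Function.update_of_ne ht]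
        conv_lhs => rw [hupd]
        exact flip_lip k hk y'' p
      calc hammingDist (gmap k y) (gmap k y')
          ≤ hammingDist (gmap k y) (gmap k y'')
            + hammingDist (gmap k y'') (gmap k y') := hammingDist_triangle _ _ _
        _ ≤ (m-1) + 1 := add_le_add h1 h2
        _ = m := by omega

lemma g_ones (k : ℕ) (hk : 1 ≤ k) : ∀ (m : ℕ) (y : Fin (2*k+1) → Bool),
    hammingDist y (fun _ => false) = m → y ≠ (fun _ => false) →
    hammingDist (gmap k y) (fun _ => true) < m := by
  intro m
  induction m using Nat.strong_induction_on with
  | _ m ih =>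
    intro y hd hne
    have hpos : 0 < m := by
      rcases Nat.eq_zero_or_pos m with h0 | h
      · exact absurd (eq_of_hammingDist_eq_zero (h0 ▸ hd)) hne
      · exact h
    have hex : ∃ p, y p = true := by
      by_contra hcon; push_neg at hcon
      apply hne; funext t
      cases h : y t
      · rfl
      · exact absurd h (by simpa using hcon t)
    obtain ⟨p, hp⟩ := hex
    by_cases hs : ∀ q, q ≠ p → y q = false
    · rw [g_single k hk y p hp hs, hammingDist_self]
      exact hpos
    · push_neg at hs
      obtain ⟨q, hqp, hq⟩ := hs
      set z := Function.update y p false with hz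
      have hz0 : z ≠ (fun _ => false) := by
        intro hcon
        have h6 := congrFun hcon q
        rw [hz, Function.update_of_ne hqp] at h6
        exact hq h6
      have hdz : hammingDist z (fun _ => false) = m - 1 := by
        have h5 := dist_update y (fun _ => false) p (by rw [hp]; simp)
        rw [hd] at h5
        exact h5
      have hm2 : 2 ≤ m := by
        have h7 : hammingDist z (fun _ => false) ≠ 0 := hammingDist_ne_zero.mpr hz0
        omega
      have h1 : hammingDist (gmap k z) (fun _ => true) < m - 1 :=
        ih (m-1) (by omega) z hdz hz0
      have h2 : hammingDist (gmap k y) (gmap k z) ≤ 1 := by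
        have hb : (!y p) = false := by simp [hp]
        have hupd : z = Function.update y p (!y p) := by rw [hb]
        rw [hupd]
        exact flip_lip k hk y p
      have h3 := hammingDist_triangle (gmap k y) (gmap k z) (fun _ => true)
      omega

lemma cast_mul_mod (k c x : ℕ) :
    ((c * (x % (2*k+1)) : ℕ) : Fin (2*k+1)) = ((c * x : ℕ) : Fin (2*k+1)) := by
  apply Fin.ext
  rw [Fin.val_natCast, Fin.val_natCast, Nat.mul_mod,
    Nat.mod_mod_of_dvd x dvd_rfl, ← Nat.mul_mod]

lemma tau_eq_mul (k : ℕ) (j : Fin (2*k+1)) :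
    tau k j = ((2 * (j:ℕ) : ℕ) : Fin (2*k+1)) := by
  unfold tau
  split_ifs with h
  · rfl
  · push_neg at h
    apply Fin.ext
    rw [Fin.val_natCast, Fin.val_natCast]
    have h2 : 2*(j:ℕ) = (2*(j:ℕ) - (2*k+1)) + (2*k+1) := by have := j.isLt; omega
    conv_rhs => rw [h2]
    rw [Nat.add_mod_right]

lemma tauInv_eq_mul (k : ℕ) (j : Fin (2*k+1)) :
    tauInv k j = (((k+1) * (j:ℕ) : ℕ) : Fin (2*k+1)) := by
  unfold tauInv
  split_ifs with h
  · have hj2 : (j:ℕ) = 2*((j:ℕ)/2) := by omega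
    have h2 : (k+1)*(j:ℕ) = (j:ℕ)/2 + ((j:ℕ)/2) * (2*k+1) := by
      conv_lhs => rw [hj2]
      ring
    apply Fin.ext
    rw [Fin.val_natCast, Fin.val_natCast, h2, Nat.add_mul_mod_self_right]
  · have hj2 : (j:ℕ) = 2*((j:ℕ)/2)+1 := by omega
    have hj3 : ((j:ℕ)+1)/2 = (j:ℕ)/2 + 1 := by omega
    have h2 : (k+1)*(j:ℕ) = (k + ((j:ℕ)+1)/2) + ((j:ℕ)/2) * (2*k+1) := by
      rw [hj3]
      conv_lhs => rw [hj2]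
      ring
    apply Fin.ext
    rw [Fin.val_natCast, Fin.val_natCast, h2, Nat.add_mul_mod_self_right]

lemma tauInv_mul' (k : ℕ) (j : Fin (2*k+1)) :
    tauInv k j = (((k+1 : ℕ)) : Fin (2*k+1)) * j := by
  rw [tauInv_eq_mul, Nat.cast_mul, Fin.cast_val_eq_self]

lemma tauInv_tau (k : ℕ) (j : Fin (2*k+1)) : tauInv k (tau k j) = j := by
  rw [tau_eq_mul, tauInv_eq_mul, Fin.val_natCast, cast_mul_mod]
  apply Fin.ext
  rw [Fin.val_natCast]
  have h3 : (k+1)*(2*(j:ℕ)) = (j:ℕ) + (j:ℕ)*(2*k+1) := by ring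
  rw [h3, Nat.add_mul_mod_self_right, Nat.mod_eq_of_lt j.isLt]

lemma tau_tauInv (k : ℕ) (j : Fin (2*k+1)) : tau k (tauInv k j) = j := by
  rw [tauInv_eq_mul, tau_eq_mul, Fin.val_natCast, cast_mul_mod]
  apply Fin.ext
  rw [Fin.val_natCast]
  have h3 : 2*((k+1)*(j:ℕ)) = (j:ℕ) + (j:ℕ)*(2*k+1) := by ring
  rw [h3, Nat.add_mul_mod_self_right, Nat.mod_eq_of_lt j.isLt]

lemma hamming_reindex {n : ℕ} (σ τ : Fin n → Fin n) (hστ : ∀ j, σ (τ j) = j)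
    (hτσ : ∀ j, τ (σ j) = j) (u v : Fin n → Bool) :
    hammingDist (fun j => u (σ j)) (fun j => v (σ j)) = hammingDist u v := by
  unfold hammingDist
  apply Finset.card_bij (fun (j : Fin n) _ => σ j)
  · intro a ha
    simp only [Finset.mem_filter, Finset.mem_univ, true_and] at ha ⊢
    exact ha
  · intro a _ b _ hab
    have := congrArg τ hab
    rwa [hτσ, hτσ] at this
  · intro i hi
    refine ⟨τ i, ?_, hστ i⟩
    simp only [Finset.mem_filter, Finset.mem_univ, true_and] at hi ⊢
    rwa [hστ]

lemma hamming_not {n : ℕ} (u v : Fin n → Bool) :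
    hammingDist (fun j => !u j) (fun j => !v j) = hammingDist u v := by
  unfold hammingDist
  congr 1
  apply Finset.filter_congr
  intro t _
  cases h1 : u t <;> cases h2 : v t <;> simp [h1, h2]

lemma hamming_snoc {n : ℕ} (u v : Fin n → Bool) (a b : Bool) :
    hammingDist (Fin.snoc u a : Fin (n+1) → Bool) (Fin.snoc v b : Fin (n+1) → Bool)
      = hammingDist u v + (if a ≠ b then 1 else 0) := by
  classical
  simp only [hammingDist, Finset.card_filter]
  rw [Fin.sum_univ_castSucc]
  congr 1
  · apply Finset.sum_congr rfl
    intro t _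
    simp [Fin.snoc_castSucc]
  · simp [Fin.snoc_last]

lemma const_false_snoc (n : ℕ) :
    (fun _ => false : Fin (n+1) → Bool) = Fin.snoc (fun _ : Fin n => false) false := by
  funext j
  by_cases hj : j = Fin.last n
  · subst hj; rw [Fin.snoc_last]
  · obtain ⟨i, rfl⟩ := Fin.exists_castSucc_eq.mpr hj
    rw [Fin.snoc_castSucc]


lemma hamming_comp_eq {n : ℕ} (σ τ : Fin n → Fin n) (hστ : ∀ j, σ (τ j) = j)
    (hτσ : ∀ j, τ (σ j) = j) (u v u' v' : Fin n → Bool)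
    (hu : ∀ j, u' j = u (σ j)) (hv : ∀ j, v' j = v (σ j)) :
    hammingDist u' v' = hammingDist u v := by
  unfold hammingDist
  apply Finset.card_bij (fun (j : Fin n) _ => σ j)
  · intro a ha
    simp only [Finset.mem_filter, Finset.mem_univ, true_and] at ha ⊢
    rw [← hu, ← hv]; exact ha
  · intro a _ b _ hab
    have h9 := congrArg τ hab
    rwa [hτσ, hτσ] at h9
  · intro b hb
    refine ⟨τ b, ?_, hστ b⟩
    simp only [Finset.mem_filter, Finset.mem_univ, true_and] at hb ⊢
    rw [hu, hv, hστ]; exact hb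

lemma hamming_not_false {n : ℕ} (w : Fin n → Bool) :
    hammingDist (fun j => ! w j) (fun _ : Fin n => false)
      = hammingDist w (fun _ => true) := by
  unfold hammingDist
  congr 1
  apply Finset.filter_congr
  intro t _
  cases h : w t <;> simp [h]

lemma g_fix (k : ℕ) (hk : 1 ≤ k) (i : Fin (2*k+1)) (j : Fin (2*k+1)) :
    gmap k (fun t => xOcc k i (tauInv k t)) j = xOcc k i (tauInv k j) := by
  set y : Fin (2*k+1) → Bool := fun t => xOcc k i (tauInv k t) with hy
  by_cases hj : y j = true
  · rw [gmap_true_of_true k y j hj]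
    exact hj.symm
  · have hjf : y j = false := by
      cases h : y j
      · rfl
      · exact absurd h hj
    have hw : k < ((tauInv k j - i : Fin (2*k+1)) : ℕ) := by
      have h2 : xOcc k i (tauInv k j) = false := hjf
      unfold xOcc at h2
      simpa using h2
    have hcastk : ((k : ℕ) : Fin (2*k+1)) = -(((k+1 : ℕ)) : Fin (2*k+1)) := by
      apply eq_neg_of_add_eq_zero_left
      rw [← Nat.cast_add]
      have h4 : k+(k+1) = 2*k+1 := by omega
      rw [h4, Fin.natCast_self]
    have hvlt := (tauInv k j - i : Fin (2*k+1)).isLt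
    have hjf2 : xOcc k i (tauInv k j) = false := hjf
    rw [hjf2]
    have hcond : gmap k y j = false := by
      rw [gmap_false_iff]
      refine ⟨hjf, ?_, ?_⟩
      · -- y (j - 1) = true
        have h1 : tauInv k (j - 1) - i
            = (tauInv k j - i) + ((k : ℕ) : Fin (2*k+1)) := by
          rw [tauInv_mul', tauInv_mul', hcastk]
          ring
        show xOcc k i (tauInv k (j-1)) = true
        unfold xOcc
        rw [decide_eq_true_eq, h1, Fin.val_add, val_cast (show k < 2*k+1 by omega),
          Nat.mod_eq_sub_mod (by omega), Nat.mod_eq_of_lt (by omega)]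
        omega
      · have hyj1 : y (j + 1) = true := by
          have h1 : tauInv k (j + 1) - i
              = (tauInv k j - i) + ((k+1 : ℕ) : Fin (2*k+1)) := by
            rw [tauInv_mul', tauInv_mul']
            ring
          show xOcc k i (tauInv k (j+1)) = true
          unfold xOcc
          rw [decide_eq_true_eq, h1, Fin.val_add, val_cast (show k+1 < 2*k+1 by omega),
            Nat.mod_eq_sub_mod (by omega), Nat.mod_eq_of_lt (by omega)]
          omega
        have hrun : runAfter k y j = 0 := by
          apply runAfter_eq k y j 0 (by omega)
          · intro s h1 h2; omega
          · right
            have h5 : ((0+1 : ℕ) : Fin (2*k+1)) = 1 := by norm_num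
            rw [h5]
            exact hyj1
        rw [hrun]
    rw [hcond]

lemma fmap_nonzero (k : ℕ) (x : Fin (2*k+1) → Bool) (hx : x ≠ fun _ => false) :
    fmap k x = Fin.snoc
      (fun j => ! gmap k (fun t => x (tauInv k t)) (tau k j)) true := by
  unfold fmap
  rw [if_neg hx]

lemma fmap_zero (k : ℕ) : fmap k (fun _ => false) = fun _ => false := by
  unfold fmap
  rw [if_pos rfl]

lemma fmap_zero_le (k : ℕ) (hk : 1 ≤ k) (x : Fin (2*k+1) → Bool)
    (hx : x ≠ fun _ => false) :
    hammingDist (fmap k x) (fmap k (fun _ => false))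
      ≤ hammingDist x (fun _ => false) := by
  set y : Fin (2*k+1) → Bool := fun t => x (tauInv k t) with hy
  have hy0 : y ≠ fun _ => false := by
    intro hcon
    apply hx
    funext j
    have h2 := congrFun hcon (tau k j)
    simp only [hy] at h2
    rwa [tauInv_tau] at h2
  rw [fmap_nonzero k x hx, fmap_zero, const_false_snoc (2*k+1), hamming_snoc]
  have hif : (if (true ≠ false) then 1 else 0) = 1 := by simp
  rw [hif]
  have e1 : hammingDist (fun j => ! gmap k y (tau k j)) (fun _ : Fin (2*k+1) => false)
      = hammingDist (fun t => ! gmap k y t) (fun _ : Fin (2*k+1) => false) :=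
    hamming_comp_eq (tau k) (tauInv k) (tau_tauInv k) (tauInv_tau k)
      (fun t => ! gmap k y t) (fun _ => false) _ _ (fun j => rfl) (fun j => rfl)
  rw [e1, hamming_not_false]
  have e2 : hammingDist y (fun _ : Fin (2*k+1) => false)
      = hammingDist x (fun _ : Fin (2*k+1) => false) :=
    hamming_comp_eq (tauInv k) (tau k) (tauInv_tau k) (tau_tauInv k)
      x (fun _ => false) y (fun _ => false) (fun j => rfl) (fun j => rfl)
  rw [← e2]
  have h3 := g_ones k hk (hammingDist y (fun _ => false)) y rfl hy0
  omega

lemma fmap_main_le (k : ℕ) (hk : 1 ≤ k) (x x' : Fin (2*k+1) → Bool)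
    (hx : x ≠ fun _ => false) (hx' : x' ≠ fun _ => false) :
    hammingDist (fmap k x) (fmap k x') ≤ hammingDist x x' := by
  set y : Fin (2*k+1) → Bool := fun t => x (tauInv k t) with hy
  set y' : Fin (2*k+1) → Bool := fun t => x' (tauInv k t) with hy'
  rw [fmap_nonzero k x hx, fmap_nonzero k x' hx', hamming_snoc]
  have hif : (if (true ≠ true) then 1 else 0) = 0 := by simp
  rw [hif, add_zero]
  have e1 : hammingDist (fun j => ! gmap k y (tau k j)) (fun j => ! gmap k y' (tau k j))
      = hammingDist (fun t => ! gmap k y t) (fun t => ! gmap k y' t) :=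
    hamming_comp_eq (tau k) (tauInv k) (tau_tauInv k) (tauInv_tau k)
      (fun t => ! gmap k y t) (fun t => ! gmap k y' t) _ _ (fun j => rfl) (fun j => rfl)
  rw [e1, hamming_not]
  have e2 : hammingDist y y' = hammingDist x x' :=
    hamming_comp_eq (tauInv k) (tau k) (tauInv_tau k) (tau_tauInv k)
      x x' y y' (fun j => rfl) (fun j => rfl)
  rw [← e2]
  exact g_lip k hk (hammingDist y y') y y' rfl

end S17

/-- `f_k` is a proof by contraction of the cyclic inequality
`C_{2k+1}(k+1,k)`: (i) it is a contraction with respect to the Hamming distance, and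
(ii) it maps the occurrence vectors onto each other, `f_k(x_i) = y_i`, where
`y_i = (complement of x_i, 1)` is the cyclic shift by `i` of `0^{k+1} 1^k` followed by
a final coordinate `1`, and `f_k(0) = 0` for the purifying region. -/
theorem stmt17 (k : ℕ) (hk : 1 ≤ k) :
    (∀ x x' : Fin (2 * k + 1) → Bool,
      hammingDist (fmap k x) (fmap k x') ≤ hammingDist x x') ∧
    (∀ i : Fin (2 * k + 1),
      fmap k (xOcc k i) = Fin.snoc (fun j => ! xOcc k i j) true) ∧
    fmap k (fun _ => false) = fun _ => false := by
  refine ⟨?_, ?_, S17.fmap_zero k⟩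
  · intro x x'
    by_cases hx : x = fun _ => false
    · by_cases hx' : x' = fun _ => false
      · subst hx; subst hx'
        simp [hammingDist_self]
      · subst hx
        rw [hammingDist_comm (fmap k _) (fmap k x'),
          hammingDist_comm (fun _ => false) x']
        exact S17.fmap_zero_le k hk x' hx'
    · by_cases hx' : x' = fun _ => false
      · subst hx'
        exact S17.fmap_zero_le k hk x hx
      · exact S17.fmap_main_le k hk x x' hx hx'
  · intro i
    have hxne : xOcc k i ≠ fun _ => false := by
      intro h
      have h2 := congrFun h i
      simp [xOcc] at h2
    rw [S17.fmap_nonzero k (xOcc k i) hxne]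
    have hAB : (fun j => ! gmap k (fun t => xOcc k i (tauInv k t)) (tau k j))
        = (fun j => ! xOcc k i j) := by
      funext j
      rw [S17.g_fix k hk i (tau k j), S17.tauInv_tau]
    rw [hAB]
end

section
/- A new five-region holographic entropy inequality: for every graph model on 5 regions, writing A = {1}, B = {2}, C = {3}, D = {4}, E = {5} and concatenation for union, the discrete entropies satisfy 2·S*(ABC) + S*(ABD) + S*(ABE) + S*(ACD) + S*(ADE) + S*(BCE) + S*(BDE) ≥ S*(AB) + S*(ABCD) + S*(ABCE) + S*(ABDE) + S*(AC) + S*(AD) + S*(BC) + S*(BE) + S*(DE). -/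
open Classical

/-- A *graph model* on `n` regions: a finite graph with symmetric nonnegative edge
weights `w` (weight `0` meaning "no edge") and a partial coloring of the vertices by
the `n+1` boundary colors; `color v = none` means `v` is a bulk vertex, color
`Fin.castSucc i` represents boundary region `i ∈ {1,…,n}` and color `Fin.last n`
represents the purifying region `n+1`. -/
structure GraphModel (n : ℕ) where
  V : Type
  [fintypeV : Fintype V]
  w : V → V → ℝ
  symm : ∀ u v, w u v = w v u
  nonneg : ∀ u v, 0 ≤ w u v
  color : V → Option (Fin (n + 1))

attribute [instance] GraphModel.fintypeV

/-- `|C(W)|`: the total weight of the edges with exactly one endpoint in `W`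
(each unordered crossing edge `{u,v}` is counted exactly once, via its ordering
with `u ∈ W` and `v ∉ W`). -/
noncomputable def GraphModel.cutWeight {n : ℕ} (G : GraphModel n) (W : Set G.V) : ℝ :=
  ∑ u : G.V, ∑ v : G.V, if u ∈ W ∧ v ∉ W then G.w u v else 0

/-- `W` is an `I`-cut: `W` contains precisely the boundary vertices whose color lies
in `I ⊆ {1,…,n}`. -/
def GraphModel.IsCut {n : ℕ} (G : GraphModel n) (I : Finset (Fin n)) (W : Set G.V) : Prop :=
  ∀ v c, G.color v = some c → (v ∈ W ↔ ∃ i ∈ I, Fin.castSucc i = c)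

/-- The discrete entropy `S*(I)`: the minimal weight of an `I`-cut. -/
noncomputable def GraphModel.entropy {n : ℕ} (G : GraphModel n) (I : Finset (Fin n)) : ℝ :=
  sInf (G.cutWeight '' {W | G.IsCut I W})

/-- The holographic entropy vector of a graph model: the collection of all discrete
entropies `S*(I)` of nonempty subsets `I ⊆ {1,…,n}`. -/
noncomputable def GraphModel.entropyVector {n : ℕ} (G : GraphModel n)
    (I : {I : Finset (Fin n) // I.Nonempty}) : ℝ :=
  G.entropy I.1

namespace Stmt19

def tblBig : ℕ := 1855170207193106731573022206384646197540812399888261131989544019901410756316004907067550833261626418434465351223976708566382459882817875669175677195232238849996666942075078187451412257069379291000897499926318564052382554003977536881114917205338789476652437438148779951241771866576573964743858931934283469428212963587583246671658606239709905030144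

def tnat (a : ℕ) : ℕ := (tblBig >>> (9 * a)) % 512

def pop9 (n : ℕ) : ℕ :=
  n % 2 + n / 2 % 2 + n / 4 % 2 + n / 8 % 2 + n / 16 % 2 + n / 32 % 2 + n / 64 % 2
    + n / 128 % 2 + n / 256 % 2

def pairOK (a b : ℕ) : Bool :=
  Nat.ble (pop9 (tnat a ^^^ tnat b)) (pop9 (a ^^^ b) + (a ^^^ b) % 2)

def rowOK (a b : ℕ) : Bool :=
  Nat.rec true (fun b' ih => pairOK a b' && ih) b

def chk (a : ℕ) : Bool :=
  Nat.rec true (fun a' ih => rowOK a' 128 && ih) a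

set_option maxRecDepth 100000 in
set_option maxHeartbeats 8000000 in
theorem chk_true : chk 128 = true := by rfl

theorem rowOK_sound (a : ℕ) : ∀ b, rowOK a b = true → ∀ b', b' < b → pairOK a b' = true := by
  intro b
  induction b with
  | zero => intro _ b' h; omega
  | succ n ih =>
    intro h b' hb'
    have h' : (pairOK a n && rowOK a n) = true := h
    rw [Bool.and_eq_true] at h'
    rcases Nat.lt_succ_iff_lt_or_eq.mp hb' with h1 | h1
    · exact ih h'.2 _ h1
    · subst h1; exact h'.1

theorem chk_sound : ∀ b, chk b = true → ∀ a, a < b → rowOK a 128 = true := by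
  intro b
  induction b with
  | zero => intro _ a h; omega
  | succ n ih =>
    intro h a ha
    have h' : (rowOK n 128 && chk n) = true := h
    rw [Bool.and_eq_true] at h'
    rcases Nat.lt_succ_iff_lt_or_eq.mp ha with h1 | h1
    · exact ih h'.2 _ h1
    · subst h1; exact h'.1

theorem pair_le (a b : ℕ) (ha : a < 128) (hb : b < 128) :
    pop9 (tnat a ^^^ tnat b) ≤ pop9 (a ^^^ b) + (a ^^^ b) % 2 := by
  have h := rowOK_sound a 128 (chk_sound 128 chk_true a ha) b hb
  simpa [pairOK] using h

theorem ite_testBit (n k : ℕ) : (if n.testBit k then 1 else 0) = n / 2 ^ k % 2 := by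
  rw [Nat.testBit_eq_decide_div_mod_eq]
  rcases Nat.mod_two_eq_zero_or_one (n / 2 ^ k) with h | h <;> simp [h]

theorem pop9_eq (n : ℕ) : pop9 n = ∑ k : Fin 9, if n.testBit k.val then 1 else 0 := by
  simp only [Fin.sum_univ_succ, Finset.univ_eq_empty, Finset.sum_empty, ite_testBit,
    Fin.val_zero, Fin.val_succ, pop9]
  norm_num
  ring

def Lset : Fin 7 → Finset (Fin 5) :=
  ![{0,1,2},{0,1,3},{0,1,4},{0,2,3},{0,3,4},{1,2,4},{1,3,4}]

def Rset : Fin 9 → Finset (Fin 5) :=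
  ![{0,1},{0,1,2,3},{0,1,2,4},{0,1,3,4},{0,2},{0,3},{1,2},{1,4},{3,4}]

def mw : Fin 7 → ℕ := ![2,1,1,1,1,1,1]

def enc (x : Fin 7 → Bool) : ℕ :=
  (cond (x 0) 1 0) + 2 * cond (x 1) 1 0 + 4 * cond (x 2) 1 0 + 8 * cond (x 3) 1 0
    + 16 * cond (x 4) 1 0 + 32 * cond (x 5) 1 0 + 64 * cond (x 6) 1 0

set_option maxRecDepth 10000 in
theorem enc_lt : ∀ x : Fin 7 → Bool, enc x < 128 := by decide

set_option maxRecDepth 10000 in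
theorem enc_testBit : ∀ (x : Fin 7 → Bool) (j : Fin 7), (enc x).testBit j.val = x j := by decide

def bpat (c : Fin 6) : Fin 7 → Bool := fun j => decide (∃ i ∈ Lset j, Fin.castSucc i = c)

theorem bnd : ∀ (c : Fin 6) (k : Fin 9),
    (tnat (enc (bpat c))).testBit k.val = decide (∃ i ∈ Rset k, Fin.castSucc i = c) := by
  decide

theorem natIneq (a b : ℕ) (ha : a < 128) (hb : b < 128) :
    (∑ k : Fin 9, if (tnat a).testBit k.val = (tnat b).testBit k.val then 0 else 1)
      ≤ ∑ j : Fin 7, mw j * (if a.testBit j.val = b.testBit j.val then 0 else 1) := by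
  have l1 : ∀ x y : ℕ,
      (∑ k : Fin 9, if x.testBit k.val = y.testBit k.val then 0 else 1) = pop9 (x ^^^ y) := by
    intro x y
    rw [pop9_eq]
    refine Finset.sum_congr rfl fun k _ => ?_
    rw [Nat.testBit_xor]
    cases hx : x.testBit k.val <;> cases hy : y.testBit k.val <;> simp
  have hc : a ^^^ b < 128 := Nat.xor_lt_two_pow (n := 7) ha hb
  have r1 : (∑ j : Fin 7, mw j * (if a.testBit j.val = b.testBit j.val then 0 else 1))
      = pop9 (a ^^^ b) + (a ^^^ b) % 2 := by
    have e1 : ∀ j : ℕ, (if a.testBit j = b.testBit j then 0 else 1) = (a ^^^ b) / 2 ^ j % 2 := by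
      intro j
      rw [← ite_testBit, Nat.testBit_xor]
      cases hx : a.testBit j <;> cases hy : b.testBit j <;> simp
    have h7 : (a ^^^ b) / 128 = 0 := Nat.div_eq_of_lt hc
    have h8 : (a ^^^ b) / 256 = 0 := Nat.div_eq_of_lt (by omega)
    simp only [Fin.sum_univ_succ, Finset.univ_eq_empty, Finset.sum_empty, e1,
      Fin.val_zero, Fin.val_succ, mw, pop9, Matrix.cons_val_succ, Matrix.cons_val_zero]
    norm_num [h7, h8]
    ring
  rw [l1, r1]
  exact pair_le a b ha hb

end Stmt19

theorem exists_minCut {n : ℕ} (G : GraphModel n) (I : Finset (Fin n)) :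
    ∃ W, G.IsCut I W ∧ G.cutWeight W = G.entropy I := by
  have hcut : G.IsCut I {v | ∃ i ∈ I, G.color v = some (Fin.castSucc i)} := by
    intro v c hc
    simp only [Set.mem_setOf_eq, hc, Option.some.injEq]
    constructor
    · rintro ⟨i, hi, h⟩; exact ⟨i, hi, h.symm⟩
    · rintro ⟨i, hi, h⟩; exact ⟨i, hi, h.symm⟩
  have hne : (G.cutWeight '' {W | G.IsCut I W}).Nonempty :=
    ⟨_, Set.mem_image_of_mem _ hcut⟩
  have hfin : (G.cutWeight '' {W | G.IsCut I W}).Finite := (Set.toFinite _).image _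
  obtain ⟨W, hW, hval⟩ := hne.csInf_mem hfin
  exact ⟨W, hW, hval⟩

theorem entropy_le_cut {n : ℕ} (G : GraphModel n) {I : Finset (Fin n)} {W : Set G.V}
    (hW : G.IsCut I W) : G.entropy I ≤ G.cutWeight W :=
  csInf_le ((Set.toFinite _).image G.cutWeight).bddBelow ⟨W, hW, rfl⟩

noncomputable def dd {n : ℕ} (G : GraphModel n) (X : Set G.V) (u v : G.V) : ℝ :=
  if (u ∈ X ↔ v ∈ X) then 0 else G.w u v

theorem cutWeight_sym {n : ℕ} (G : GraphModel n) (W : Set G.V) :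
    2 * G.cutWeight W = ∑ u : G.V, ∑ v : G.V, dd G W u v := by
  have h2 : G.cutWeight W = ∑ u : G.V, ∑ v : G.V, if v ∈ W ∧ u ∉ W then G.w u v else 0 := by
    rw [GraphModel.cutWeight, Finset.sum_comm]
    refine Finset.sum_congr rfl fun u _ => Finset.sum_congr rfl fun v _ => ?_
    rw [G.symm]
  have h1 : ∀ u v : G.V, dd G W u v
      = (if u ∈ W ∧ v ∉ W then G.w u v else 0) + (if v ∈ W ∧ u ∉ W then G.w u v else 0) := by
    intro u v
    unfold dd
    by_cases hu : u ∈ W <;> by_cases hv : v ∈ W <;> simp [hu, hv]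
  calc 2 * G.cutWeight W = G.cutWeight W + G.cutWeight W := by ring
    _ = ∑ u : G.V, ∑ v : G.V, ((if u ∈ W ∧ v ∉ W then G.w u v else 0)
          + (if v ∈ W ∧ u ∉ W then G.w u v else 0)) := by
        nth_rewrite 2 [h2]
        rw [GraphModel.cutWeight, ← Finset.sum_add_distrib]
        exact Finset.sum_congr rfl fun u _ => (Finset.sum_add_distrib).symm
    _ = _ := Finset.sum_congr rfl fun u _ => Finset.sum_congr rfl fun v _ => (h1 u v).symm

open Stmt19

/-- A new five-region holographic entropy inequality, with
`A = {1}, B = {2}, C = {3}, D = {4}, E = {5}` (here `0,…,4 : Fin 5`):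
`2 S*(ABC) + S*(ABD) + S*(ABE) + S*(ACD) + S*(ADE) + S*(BCE) + S*(BDE)
 ≥ S*(AB) + S*(ABCD) + S*(ABCE) + S*(ABDE) + S*(AC) + S*(AD) + S*(BC) + S*(BE)
 + S*(DE)`. -/
theorem stmt19 (G : GraphModel 5) :
    2 * G.entropy {0, 1, 2} + G.entropy {0, 1, 3} + G.entropy {0, 1, 4}
        + G.entropy {0, 2, 3} + G.entropy {0, 3, 4} + G.entropy {1, 2, 4}
        + G.entropy {1, 3, 4}
      ≥ G.entropy {0, 1} + G.entropy {0, 1, 2, 3} + G.entropy {0, 1, 2, 4}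
        + G.entropy {0, 1, 3, 4} + G.entropy {0, 2} + G.entropy {0, 3}
        + G.entropy {1, 2} + G.entropy {1, 4} + G.entropy {3, 4} := by
  choose Wc hWc hwe using fun j : Fin 7 => exists_minCut G (Lset j)
  set pat : G.V → Fin 7 → Bool := fun v j => decide (v ∈ Wc j) with hpat
  set U : Fin 9 → Set G.V :=
    fun k => {v : G.V | (tnat (enc (pat v))).testBit k.val = true} with hUdef
  have hUcut : ∀ k, G.IsCut (Rset k) (U k) := by
    intro k v c hc
    have hp : pat v = bpat c := by
      funext j
      exact decide_eq_decide.mpr (hWc j v c hc)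
    show (tnat (enc (pat v))).testBit k.val = true ↔ _
    rw [hp, bnd c k, decide_eq_true_eq]
  have hRle : ∀ k, G.entropy (Rset k) ≤ G.cutWeight (U k) := fun k => entropy_le_cut G (hUcut k)
  -- pointwise contraction inequality
  have key : ∀ u v : G.V,
      (∑ k : Fin 9, dd G (U k) u v) ≤ ∑ j : Fin 7, (mw j : ℝ) * dd G (Wc j) u v := by
    intro u v
    have hnat := natIneq (enc (pat u)) (enc (pat v)) (enc_lt _) (enc_lt _)
    have hPk : ∀ k : Fin 9, (u ∈ U k ↔ v ∈ U k)
        ↔ ((tnat (enc (pat u))).testBit k.val = (tnat (enc (pat v))).testBit k.val) := by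
      intro k
      exact Bool.eq_iff_iff.symm
    have hQj : ∀ j : Fin 7, (u ∈ Wc j ↔ v ∈ Wc j)
        ↔ ((enc (pat u)).testBit j.val = (enc (pat v)).testBit j.val) := by
      intro j
      rw [enc_testBit, enc_testBit]
      show _ ↔ (decide (u ∈ Wc j) = decide (v ∈ Wc j))
      rw [decide_eq_decide]
    calc (∑ k : Fin 9, dd G (U k) u v)
        = (↑(∑ k : Fin 9, if (tnat (enc (pat u))).testBit k.val
              = (tnat (enc (pat v))).testBit k.val then (0:ℕ) else 1) : ℝ) * G.w u v := by
          push_cast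
          rw [Finset.sum_mul]
          refine Finset.sum_congr rfl fun k _ => ?_
          unfold dd
          by_cases h : (tnat (enc (pat u))).testBit k.val = (tnat (enc (pat v))).testBit k.val
          · simp [h, (hPk k).mpr h]
          · have h' : ¬ (u ∈ U k ↔ v ∈ U k) := fun hh => h ((hPk k).mp hh)
            simp [h, h']
      _ ≤ (↑(∑ j : Fin 7, mw j * (if (enc (pat u)).testBit j.val
              = (enc (pat v)).testBit j.val then (0:ℕ) else 1)) : ℝ) * G.w u v :=
          mul_le_mul_of_nonneg_right (Nat.cast_le.mpr hnat) (G.nonneg u v)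
      _ = ∑ j : Fin 7, (mw j : ℝ) * dd G (Wc j) u v := by
          push_cast
          rw [Finset.sum_mul]
          refine Finset.sum_congr rfl fun j _ => ?_
          unfold dd
          by_cases h : (enc (pat u)).testBit j.val = (enc (pat v)).testBit j.val
          · simp [h, (hQj j).mpr h]
          · have h' : ¬ (u ∈ Wc j ↔ v ∈ Wc j) := fun hh => h ((hQj j).mp hh)
            simp [h, h']
  -- double counting
  have h2 : (∑ k : Fin 9, G.cutWeight (U k)) ≤ ∑ j : Fin 7, (mw j : ℝ) * G.cutWeight (Wc j) := by
    have e1 : 2 * ∑ k : Fin 9, G.cutWeight (U k)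
        = ∑ u : G.V, ∑ v : G.V, ∑ k : Fin 9, dd G (U k) u v := by
      rw [Finset.mul_sum]
      simp_rw [cutWeight_sym]
      rw [Finset.sum_comm]
      exact Finset.sum_congr rfl fun u _ => Finset.sum_comm
    have e2 : 2 * ∑ j : Fin 7, (mw j : ℝ) * G.cutWeight (Wc j)
        = ∑ u : G.V, ∑ v : G.V, ∑ j : Fin 7, (mw j : ℝ) * dd G (Wc j) u v := by
      rw [Finset.mul_sum]
      have e3 : ∀ j : Fin 7, 2 * ((mw j : ℝ) * G.cutWeight (Wc j))
          = ∑ u : G.V, ∑ v : G.V, (mw j : ℝ) * dd G (Wc j) u v := by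
        intro j
        rw [show 2 * ((mw j : ℝ) * G.cutWeight (Wc j))
            = (mw j : ℝ) * (2 * G.cutWeight (Wc j)) by ring,
          cutWeight_sym, Finset.mul_sum]
        exact Finset.sum_congr rfl fun u _ => (Finset.mul_sum _ _ _)
      simp_rw [e3]
      rw [Finset.sum_comm]
      exact Finset.sum_congr rfl fun u _ => Finset.sum_comm
    have hsum : ∑ u : G.V, ∑ v : G.V, (∑ k : Fin 9, dd G (U k) u v)
        ≤ ∑ u : G.V, ∑ v : G.V, ∑ j : Fin 7, (mw j : ℝ) * dd G (Wc j) u v :=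
      Finset.sum_le_sum fun u _ => Finset.sum_le_sum fun v _ => key u v
    rw [← e1, ← e2] at hsum
    linarith
  have hmain : ∑ k : Fin 9, G.entropy (Rset k) ≤ ∑ j : Fin 7, (mw j : ℝ) * G.entropy (Lset j) := by
    calc ∑ k : Fin 9, G.entropy (Rset k) ≤ ∑ k : Fin 9, G.cutWeight (U k) :=
          Finset.sum_le_sum fun k _ => hRle k
      _ ≤ ∑ j : Fin 7, (mw j : ℝ) * G.cutWeight (Wc j) := h2
      _ = ∑ j : Fin 7, (mw j : ℝ) * G.entropy (Lset j) :=
          Finset.sum_congr rfl fun j _ => by rw [hwe]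
  have eL : ∑ j : Fin 7, (mw j : ℝ) * G.entropy (Lset j)
      = 2 * G.entropy {0, 1, 2} + G.entropy {0, 1, 3} + G.entropy {0, 1, 4}
        + G.entropy {0, 2, 3} + G.entropy {0, 3, 4} + G.entropy {1, 2, 4}
        + G.entropy {1, 3, 4} := by
    simp [Fin.sum_univ_succ, Lset, mw]
    ring
  have eR : ∑ k : Fin 9, G.entropy (Rset k)
      = G.entropy {0, 1} + G.entropy {0, 1, 2, 3} + G.entropy {0, 1, 2, 4}
        + G.entropy {0, 1, 3, 4} + G.entropy {0, 2} + G.entropy {0, 3}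
        + G.entropy {1, 2} + G.entropy {1, 4} + G.entropy {3, 4} := by
    simp [Fin.sum_univ_succ, Rset]
    ring
  rw [eL, eR] at hmain
  linarith
end
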